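/- Let (C, O) be an ultraglutos, i.e. a clopos satisfying axioms (G1)–(G4) and the strong axiom (G5): every epi in O is effective, if fp ∈ O and p ∈ O with p epi then f ∈ O, and every open equivalence relation in C is effective and has a universal coequalizer belonging to O. Then axiom (G5P) holds automatically: for every diagram X →^r R →^g S with r an open epimorphism, and every arrow f : Y → S such that the pullback V of f along g∘r exists, the pullback of f along g exists. -/

import Mathlib

open CategoryTheory Limits

universe u v

/-- A pair of parallel arrows (possibly with different codomains) is jointly monic. -/
def JointlyMono {C : Type u} [Category.{v} C] {U X Y : C} (d0 : U ⟶ X) (d1 : U ⟶ Y) :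
    Prop :=
  ∀ {T : C} (f g : T ⟶ U), f ≫ d0 = g ≫ d0 → f ≫ d1 = g ≫ d1 → f = g

/-- `(d0, d1)` is an equivalence relation on `X` in the functorial sense. -/
def IsEquivRelPair {C : Type u} [Category.{v} C] {U X : C} (d0 d1 : U ⟶ X) : Prop :=
  JointlyMono d0 d1 ∧
    ∀ T : C, Equivalence (fun a b : T ⟶ X => ∃ h : T ⟶ U, h ≫ d0 = a ∧ h ≫ d1 = b)

/-- A clopos structure (axiom (G1)). -/
structure Clopos (C : Type u) [Category.{v} C] where
  O : MorphismProperty C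
  iso_mem : ∀ {X Y : C} (f : X ⟶ Y), IsIso f → O f
  comp_mem : ∀ {X Y Z : C} (f : X ⟶ Y) (g : Y ⟶ Z), O f → O g → O (f ≫ g)
  pb_exists : ∀ {X Y Z : C} (f : X ⟶ Z) (u : Y ⟶ Z), O u →
    ∃ (P : C) (p : P ⟶ X) (q : P ⟶ Y), IsPullback p q f u
  pb_stable : ∀ {P X Y Z : C} (p : P ⟶ X) (q : P ⟶ Y) (f : X ⟶ Z) (u : Y ⟶ Z),
    O u → IsPullback p q f u → O p

variable {C : Type u} [Category.{v} C]

/-- `O/X`: the full subcategory of the slice on clopen arrows. -/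
abbrev OSlice (G : Clopos C) (X : C) : Type max u v :=
  ObjectProperty.FullSubcategory (fun f : Over X => G.O f.hom)

/-- The π of a colimiting cofork is an epimorphism. -/
lemma epiOfCofork {A B P : C} {f g : A ⟶ B} {π : B ⟶ P} {w : f ≫ π = g ≫ π}
    (h : IsColimit (Cofork.ofπ π w)) : Epi π :=
  ⟨fun u v huv => Cofork.IsColimit.hom_ext h (by simpa using huv)⟩

/-- Transfer a pullback square along an isomorphism of the base. -/
lemma pbIsoTransfer {P A B Z Z' : C} {a : P ⟶ A} {b : P ⟶ B} {u : A ⟶ Z'} {i : Z' ⟶ Z}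
    [IsIso i] {v : B ⟶ Z} (h : IsPullback a b (u ≫ i) v) :
    IsPullback a b u (v ≫ inv i) := by
  have comm : a ≫ u = b ≫ (v ≫ inv i) := by
    rw [← cancel_mono i]
    simp only [Category.assoc, IsIso.inv_hom_id, Category.comp_id]
    simpa using h.w
  refine IsPullback.of_isLimit (PullbackCone.IsLimit.mk comm
    (fun s => h.lift s.fst s.snd ?_)
    (fun s => h.lift_fst _ _ _) (fun s => h.lift_snd _ _ _)
    (fun s m h1 h2 => h.hom_ext (by simp [h1]) (by simp [h2])))
  have hc := s.condition
  calc s.fst ≫ u ≫ i = (s.fst ≫ u) ≫ i := by simp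
    _ = (s.snd ≫ v ≫ inv i) ≫ i := by rw [hc]
    _ = s.snd ≫ v := by simp

/-- In an ultraglutos (a clopos satisfying (G2), (G3), (G4) and the strong axiom (G5)),
axiom (G5P) holds automatically: for `X →r R →g S` with `r` an open epi and `f : Y ⟶ S`,
if the pullback of `f` along `g ∘ r` exists then the pullback of `f` along `g`
exists. -/
theorem stmt14 (G : Clopos C)
    -- (G2)
    (hG2 : ∀ {X Y Z : C} (g : X ⟶ Y) (f : Y ⟶ Z), G.O (g ≫ f) → G.O f → G.O g)
    -- (G3a) each `O/X` is an elementary topos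
    (h3lim : ∀ X : C, HasFiniteLimits (OSlice G X))
    (h3cc : ∀ X : C,
      letI := h3lim X
      letI := CartesianMonoidalCategory.ofHasFiniteProducts (C := OSlice G X)
      Nonempty (MonoidalClosed (OSlice G X)))
    (h3cl : ∀ X : C,
      letI := h3lim X
      ∃ (Ω : OSlice G X) (t : ⊤_ (OSlice G X) ⟶ Ω),
        ∀ {A B : OSlice G X} (m : A ⟶ B), Mono m →
          ∃! χ : B ⟶ Ω, IsPullback (terminal.from A) m t χ)
    -- (G3b) each `f* : O/Y → O/X` is the inverse image of a geometric morphism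
    (h3b : ∀ {X Y : C} (f : X ⟶ Y),
      ∃ (Fs : OSlice G Y ⥤ OSlice G X) (R : OSlice G X ⥤ OSlice G Y),
        Nonempty (Fs ⊣ R) ∧
        ∀ g : OSlice G Y, ∃ q : (Fs.obj g).obj.left ⟶ g.obj.left,
          IsPullback (Fs.obj g).obj.hom q f g.obj.hom)
    -- (G4) disjoint and universal finite coproducts with clopen coprojections
    [HasFiniteCoproducts C] [HasInitial C]
    (h4inl : ∀ X Y : C, G.O (coprod.inl : X ⟶ X ⨿ Y) ∧ G.O (coprod.inr : Y ⟶ X ⨿ Y))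
    (h4disj : ∀ X Y : C,
      IsPullback (initial.to X) (initial.to Y) (coprod.inl : X ⟶ X ⨿ Y) coprod.inr)
    (h4univ : ∀ {X Y W : C} (f : W ⟶ X ⨿ Y) {A B : C} (a : A ⟶ W) (pa : A ⟶ X)
      (b : B ⟶ W) (pb : B ⟶ Y), IsPullback a pa f coprod.inl →
      IsPullback b pb f coprod.inr → Nonempty (IsColimit (BinaryCofan.mk a b)))
    (h4b : ∀ {A B X : C} (u : A ⟶ X) (v : B ⟶ X), G.O u → G.O v →
      G.O (coprod.desc u v))
    -- (G5a) open epis are effective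
    (h5a : ∀ {U X : C} (u : U ⟶ X), G.O u → Epi u →
      ∀ {K : C} (k1 k2 : K ⟶ U) (hk : IsPullback k1 k2 u u),
        Nonempty (IsColimit (Cofork.ofπ u hk.w)))
    -- (G5b)
    (h5b : ∀ {X Y Z : C} (p : X ⟶ Y) (f : Y ⟶ Z), G.O (p ≫ f) → G.O p → Epi p → G.O f)
    -- (G5cu, strong form) open equivalence relations are effective and have universal
    -- coequalizers belonging to `O`
    (h5cu : ∀ {U X : C} (u v : U ⟶ X), G.O u → G.O v → IsEquivRelPair u v →
      ∃ (Q : C) (q : X ⟶ Q) (hw : u ≫ q = v ≫ q),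
        G.O q ∧ Nonempty (IsColimit (Cofork.ofπ q hw)) ∧ IsPullback u v q q ∧
        ∀ {Z : C} (f : Z ⟶ Q) {X' : C} (pX : X' ⟶ X) (pZ : X' ⟶ Z),
          IsPullback pX pZ q f →
          ∀ {K : C} (k1 k2 : K ⟶ X') (hk : IsPullback k1 k2 pZ pZ),
            Nonempty (IsColimit (Cofork.ofπ pZ hk.w))) :
    -- conclusion: axiom (G5P)
    ∀ {X R S Y : C} (r : X ⟶ R) (g : R ⟶ S) (f : Y ⟶ S), G.O r → Epi r →
      (∃ (V : C) (v1 : V ⟶ X) (v2 : V ⟶ Y), IsPullback v1 v2 (r ≫ g) f) →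
      ∃ (W : C) (w1 : W ⟶ R) (w2 : W ⟶ Y), IsPullback w1 w2 g f := by
  intro X R S Y r g f hOr hEpir hex
  obtain ⟨V, v1, v2, hV⟩ := hex
  haveI := hEpir
  -- kernel pair of r
  obtain ⟨K, k1, k2, hK⟩ := G.pb_exists r r hOr
  have hOk1 : G.O k1 := G.pb_stable k1 k2 r r hOr hK
  have hOk2 : G.O k2 := G.pb_stable k2 k1 r r hOr hK.flip
  -- the kernel pair is an open equivalence relation
  have hKer : IsEquivRelPair k1 k2 := by
    refine ⟨fun a b h1 h2 => hK.hom_ext h1 h2, fun T => ?_⟩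
    refine ⟨fun a => ⟨hK.lift a a rfl, hK.lift_fst _ _ _, hK.lift_snd _ _ _⟩,
      ?_, ?_⟩
    · rintro a b ⟨h, h1, h2⟩
      have hba : b ≫ r = a ≫ r := by
        rw [← h1, ← h2]
        simp only [Category.assoc]
        rw [hK.w]
      exact ⟨hK.lift b a hba, hK.lift_fst _ _ _, hK.lift_snd _ _ _⟩
    · rintro a b c ⟨h, h1, h2⟩ ⟨h', h1', h2'⟩
      have hab : a ≫ r = b ≫ r := by
        rw [← h1, ← h2]
        simp only [Category.assoc]
        rw [hK.w]
      have hbc : b ≫ r = c ≫ r := by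
        rw [← h1', ← h2']
        simp only [Category.assoc]
        rw [hK.w]
      exact ⟨hK.lift a c (hab.trans hbc), hK.lift_fst _ _ _, hK.lift_snd _ _ _⟩
  -- quotient of the kernel pair, and comparison with r
  obtain ⟨Q', q', hwq', hOq', ⟨hcolimQ'⟩, hkpQ', hunivQ'⟩ := h5cu k1 k2 hOk1 hOk2 hKer
  haveI hEpiq' : Epi q' := epiOfCofork hcolimQ'
  obtain ⟨hrcolim⟩ := h5a r hOr hEpir k1 k2 hK
  obtain ⟨i, hi⟩ := Cofork.IsColimit.desc' hcolimQ' r hK.w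
  obtain ⟨j, hj⟩ := Cofork.IsColimit.desc' hrcolim q' hwq'
  have hqi : q' ≫ i = r := by simpa using hi
  have hrj : r ≫ j = q' := by simpa using hj
  haveI hIsoi : IsIso i := by
    refine ⟨j, ?_, ?_⟩
    · rw [← cancel_epi q']
      rw [reassoc_of% hqi, hrj]
      exact (Category.comp_id q').symm
    · rw [← cancel_epi r]
      rw [reassoc_of% hrj, hqi]
      exact (Category.comp_id r).symm
  -- descent along pullbacks of r
  have rdesc : ∀ {T P : C} (t : T ⟶ R) (pX : P ⟶ X) (pT : P ⟶ T),
      IsPullback pX pT r t →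
      Epi pT ∧ ∀ {W : C} (c : P ⟶ W),
        (∀ {M : C} (α β : M ⟶ P), α ≫ pT = β ≫ pT → α ≫ c = β ≫ c) →
        ∃ d : T ⟶ W, pT ≫ d = c := by
    intro T P t pX pT h
    have hOpT : G.O pT := G.pb_stable pT pX t r hOr h.flip
    obtain ⟨Kp, a, b, hKp⟩ := G.pb_exists pT pT hOpT
    have h2 : IsPullback pX pT (q' ≫ i) t := by rwa [hqi]
    have h3 : IsPullback pX pT q' (t ≫ inv i) := pbIsoTransfer h2
    obtain ⟨hcoeq⟩ := hunivQ' (t ≫ inv i) pX pT h3 a b hKp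
    refine ⟨epiOfCofork hcoeq, fun {W} c hc => ?_⟩
    obtain ⟨d, hd⟩ := Cofork.IsColimit.desc' hcoeq c (hc a b hKp.w)
    exact ⟨d, by simpa using hd⟩
  -- the open equivalence relation on V
  obtain ⟨U, d0, e, hU⟩ := G.pb_exists v1 k1 hOk1
  have hOd0 : G.O d0 := G.pb_stable d0 e v1 k1 hOk1 hU
  have hd1w : (e ≫ k2) ≫ (r ≫ g) = (d0 ≫ v2) ≫ f := by
    simp only [Category.assoc]
    rw [← reassoc_of% hK.w, ← reassoc_of% hU.w, hV.w]
  set d1 : U ⟶ V := hV.lift (e ≫ k2) (d0 ≫ v2) hd1w with hd1def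
  have hd1v1 : d1 ≫ v1 = e ≫ k2 := hV.lift_fst _ _ _
  have hd1v2 : d1 ≫ v2 = d0 ≫ v2 := hV.lift_snd _ _ _
  -- (d1, e) is also a pullback, so d1 is open
  have hU2 : IsPullback d1 e v1 k2 := by
    have cw : ∀ (s : PullbackCone v1 k2),
        (s.snd ≫ k1) ≫ (r ≫ g) = (s.fst ≫ v2) ≫ f := by
      intro s
      simp only [Category.assoc]
      rw [reassoc_of% hK.w, ← reassoc_of% s.condition, hV.w]
    have cw2 : ∀ (s : PullbackCone v1 k2),
        hV.lift (s.snd ≫ k1) (s.fst ≫ v2) (cw s) ≫ v1 = s.snd ≫ k1 := fun s =>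
      hV.lift_fst _ _ _
    refine IsPullback.of_isLimit (PullbackCone.IsLimit.mk hd1v1
      (fun s => hU.lift (hV.lift (s.snd ≫ k1) (s.fst ≫ v2) (cw s)) s.snd (cw2 s))
      (fun s => ?_) (fun s => hU.lift_snd _ _ _)
      (fun s m h1 h2 => ?_))
    · -- fac_left
      apply hV.hom_ext
      · simp only [Category.assoc, hd1v1, hU.lift_snd_assoc]
        exact s.condition.symm
      · simp only [Category.assoc, hd1v2, hU.lift_fst_assoc, hV.lift_snd]
    · -- uniqueness
      apply hU.hom_ext
      · apply hV.hom_ext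
        · simp only [Category.assoc, hU.w, reassoc_of% h2, hU.lift_snd_assoc]
        · conv_lhs => rw [Category.assoc, ← hd1v2, ← Category.assoc, h1]
          rw [Category.assoc, hU.lift_fst_assoc, hV.lift_snd]
      · rw [hU.lift_snd, h2]
  have hOd1 : G.O d1 := G.pb_stable d1 e v1 k2 hOk2 hU2
  -- (d0, d1) is an equivalence relation
  have hEq : IsEquivRelPair d0 d1 := by
    constructor
    · intro T a b h1 h2
      apply hU.hom_ext h1
      apply hK.hom_ext
      · simp only [Category.assoc, ← hU.w, reassoc_of% h1]
      · simp only [Category.assoc, ← hd1v1, reassoc_of% h2]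
    · intro T
      constructor
      · -- refl
        intro a
        refine ⟨hU.lift a (hK.lift (a ≫ v1) (a ≫ v1) rfl)
          (hK.lift_fst _ _ _).symm, hU.lift_fst _ _ _, hV.hom_ext ?_ ?_⟩
        · simp only [Category.assoc, hd1v1, hU.lift_snd_assoc, hK.lift_snd]
        · simp only [Category.assoc, hd1v2, hU.lift_fst_assoc]
      · -- symm
        rintro a b ⟨h, h1, h2⟩
        have hbr : (b ≫ v1) ≫ r = (a ≫ v1) ≫ r := by
          rw [← h1, ← h2]
          simp only [Category.assoc, reassoc_of% hd1v1, reassoc_of% hU.w, ← hK.w]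
        refine ⟨hU.lift b (hK.lift (b ≫ v1) (a ≫ v1) hbr)
          (hK.lift_fst _ _ _).symm, hU.lift_fst _ _ _, hV.hom_ext ?_ ?_⟩
        · simp only [Category.assoc, hd1v1, hU.lift_snd_assoc, hK.lift_snd]
        · simp only [Category.assoc, hd1v2, hU.lift_fst_assoc]
          rw [← h1, ← h2]
          simp only [Category.assoc, hd1v2]
      · -- trans
        rintro a b c ⟨h, h1, h2⟩ ⟨h', h1', h2'⟩
        have hac : (a ≫ v1) ≫ r = (c ≫ v1) ≫ r := by
          have e1 : a ≫ (v1 ≫ r) = b ≫ (v1 ≫ r) := by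
            rw [← h1, ← h2]
            simp only [Category.assoc, reassoc_of% hd1v1, reassoc_of% hU.w, ← hK.w]
          have e2 : b ≫ (v1 ≫ r) = c ≫ (v1 ≫ r) := by
            rw [← h1', ← h2']
            simp only [Category.assoc, reassoc_of% hd1v1, reassoc_of% hU.w, ← hK.w]
          simpa [Category.assoc] using e1.trans e2
        refine ⟨hU.lift a (hK.lift (a ≫ v1) (c ≫ v1) hac)
          (hK.lift_fst _ _ _).symm, hU.lift_fst _ _ _, hV.hom_ext ?_ ?_⟩
        · simp only [Category.assoc, hd1v1, hU.lift_snd_assoc, hK.lift_snd]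
        · have e1 : a ≫ v2 = b ≫ v2 := by
            rw [← h1, ← h2]
            simp only [Category.assoc, hd1v2]
          have e2 : b ≫ v2 = c ≫ v2 := by
            rw [← h1', ← h2']
            simp only [Category.assoc, hd1v2]
          simp only [Category.assoc, hd1v2, hU.lift_fst_assoc]
          simpa [Category.assoc] using e1.trans e2
  -- quotient of V by the relation
  obtain ⟨Q, q, hwq, hOq, ⟨hQcolim⟩, hQkp, hQuniv⟩ := h5cu d0 d1 hOd0 hOd1 hEq
  haveI hEpiq : Epi q := epiOfCofork hQcolim
  obtain ⟨w2, hw2'⟩ := Cofork.IsColimit.desc' hQcolim v2 hd1v2.symm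
  have hw1c : d0 ≫ v1 ≫ r = d1 ≫ v1 ≫ r := by
    rw [reassoc_of% hU.w, reassoc_of% hd1v1, hK.w]
  obtain ⟨w1, hw1'⟩ := Cofork.IsColimit.desc' hQcolim (v1 ≫ r) hw1c
  have hw1 : q ≫ w1 = v1 ≫ r := by simpa using hw1'
  have hw2 : q ≫ w2 = v2 := by simpa using hw2'
  have hcommW : w1 ≫ g = w2 ≫ f := by
    rw [← cancel_epi q]
    rw [reassoc_of% hw1, reassoc_of% hw2]
    simpa using hV.w
  -- epi-ness of pullbacks of q
  have qpbEpi : ∀ {T P : C} (t : T ⟶ Q) (pV : P ⟶ V) (pT : P ⟶ T),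
      IsPullback pV pT q t → Epi pT := by
    intro T P t pV pT h
    have hOpT : G.O pT := G.pb_stable pT pV t q hOq h.flip
    obtain ⟨M, a, b, hM⟩ := G.pb_exists pT pT hOpT
    obtain ⟨hc⟩ := hQuniv t pV pT h a b hM
    exact epiOfCofork hc
  -- (w1, w2) is jointly monic
  have jm : ∀ {T : C} (t t' : T ⟶ Q), t ≫ w1 = t' ≫ w1 → t ≫ w2 = t' ≫ w2 → t = t' := by
    intro T t t' ht1 ht2
    obtain ⟨P1, p1, p2, hP1⟩ := G.pb_exists t q hOq
    haveI e1 : Epi p1 := qpbEpi t p2 p1 hP1.flip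
    obtain ⟨P2, a, b, hP2⟩ := G.pb_exists (p1 ≫ t') q hOq
    haveI e2 : Epi a := qpbEpi (p1 ≫ t') b a hP2.flip
    have hr1 : (a ≫ p2 ≫ v1) ≫ r = (b ≫ v1) ≫ r := by
      simp only [Category.assoc]
      rw [← hw1, ← reassoc_of% hP1.w, ht1, reassoc_of% hP2.w]
    obtain ⟨L2, hL2d0, hL2e⟩ : ∃ L2 : P2 ⟶ U, L2 ≫ d0 = a ≫ p2 ∧
        L2 ≫ e = hK.lift (a ≫ p2 ≫ v1) (b ≫ v1) hr1 :=
      ⟨hU.lift _ _ (by rw [hK.lift_fst, Category.assoc]),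
        hU.lift_fst _ _ _, hU.lift_snd _ _ _⟩
    have hm1 : L2 ≫ d1 = b := by
      apply hV.hom_ext
      · simp only [Category.assoc, hd1v1]
        rw [← Category.assoc, hL2e, hK.lift_snd]
      · simp only [Category.assoc, hd1v2]
        rw [← Category.assoc, hL2d0]
        simp only [Category.assoc]
        rw [← hw2, ← reassoc_of% hP1.w, ht2, reassoc_of% hP2.w]
    have key : a ≫ p1 ≫ t = a ≫ p1 ≫ t' := by
      rw [hP1.w, ← reassoc_of% hL2d0, hwq, ← Category.assoc, hm1, ← hP2.w]
    rw [← cancel_epi p1, ← cancel_epi a]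
    exact key
  -- existence of lifts
  have lift_ex : ∀ {T : C} (t1 : T ⟶ R) (t2 : T ⟶ Y), t1 ≫ g = t2 ≫ f →
      ∃ ℓ : T ⟶ Q, ℓ ≫ w1 = t1 ∧ ℓ ≫ w2 = t2 := by
    intro T t1 t2 hcomm
    obtain ⟨P, pT, pX, hpb⟩ := G.pb_exists t1 r hOr
    obtain ⟨hEpiPT, hdesc⟩ := rdesc t1 pX pT hpb.flip
    haveI := hEpiPT
    have hu : pX ≫ (r ≫ g) = (pT ≫ t2) ≫ f := by
      rw [← Category.assoc, ← hpb.w, Category.assoc, hcomm, Category.assoc]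
    obtain ⟨L3, hL3v1, hL3v2⟩ : ∃ L3 : P ⟶ V, L3 ≫ v1 = pX ∧ L3 ≫ v2 = pT ≫ t2 :=
      ⟨hV.lift pX (pT ≫ t2) hu, hV.lift_fst _ _ _, hV.lift_snd _ _ _⟩
    have hcond : ∀ {M : C} (α β : M ⟶ P), α ≫ pT = β ≫ pT →
        α ≫ (L3 ≫ q) = β ≫ (L3 ≫ q) := by
      intro M α β hαβ
      have hXr : (α ≫ pX) ≫ r = (β ≫ pX) ≫ r := by
        simp only [Category.assoc]
        rw [← hpb.w, ← Category.assoc, hαβ, Category.assoc]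
      obtain ⟨L4, hL4d0, hL4e⟩ : ∃ L4 : M ⟶ U, L4 ≫ d0 = α ≫ L3 ∧
          L4 ≫ e = hK.lift (α ≫ pX) (β ≫ pX) hXr :=
        ⟨hU.lift _ _ (by rw [hK.lift_fst, Category.assoc, hL3v1]),
          hU.lift_fst _ _ _, hU.lift_snd _ _ _⟩
      have hm4 : L4 ≫ d1 = β ≫ L3 := by
        apply hV.hom_ext
        · simp only [Category.assoc, hd1v1]
          rw [← Category.assoc, hL4e, hK.lift_snd, hL3v1]
        · simp only [Category.assoc, hd1v2]
          rw [← Category.assoc, hL4d0]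
          simp only [Category.assoc, hL3v2, reassoc_of% hαβ]
      calc α ≫ L3 ≫ q = (L4 ≫ d0) ≫ q := by rw [hL4d0, Category.assoc]
        _ = (L4 ≫ d1) ≫ q := by simp only [Category.assoc, hwq]
        _ = β ≫ L3 ≫ q := by rw [hm4, Category.assoc]
    obtain ⟨d, hd⟩ := hdesc (L3 ≫ q) hcond
    refine ⟨d, ?_, ?_⟩
    · rw [← cancel_epi pT, ← Category.assoc, hd, Category.assoc, hw1,
        ← Category.assoc, hL3v1, ← hpb.w]
    · rw [← cancel_epi pT, ← Category.assoc, hd, Category.assoc, hw2, hL3v2]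
  refine ⟨Q, w1, w2, IsPullback.of_isLimit (PullbackCone.IsLimit.mk hcommW
    (fun s => (lift_ex s.fst s.snd s.condition).choose)
    (fun s => (lift_ex s.fst s.snd s.condition).choose_spec.1)
    (fun s => (lift_ex s.fst s.snd s.condition).choose_spec.2)
    (fun s m h1 h2 => jm m _
      (h1.trans (lift_ex s.fst s.snd s.condition).choose_spec.1.symm)
      (h2.trans (lift_ex s.fst s.snd s.condition).choose_spec.2.symm)))⟩
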